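/- Let n ≥ 1 and let k be a field. Let k⟨X⟩ be the free associative algebra over k on x_1,…,x_n, and let I be the two-sided ideal generated by { x_{σ(1)}⋯x_{σ(n)} − x_1⋯x_n : σ ∈ Sym_n }. Write x_ε = x_1x_2⋯x_n. Then the images in the quotient algebra k⟨X⟩/I of the following set of words form a k-linear basis of k⟨X⟩/I: all words u in x_1,…,x_n that contain no subword of the form x_{σ(1)}x_{σ(2)}⋯x_{σ(n)} for any σ ∈ Sym_n, together with all words of the form x_1^{m_1}·x_ε·x_2^{m_2}⋯x_n^{m_n} with m_1,…,m_n ≥ 0. -/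

import Mathlib

/-- The monomial of `k⟨X⟩` corresponding to a word `w` in the generators. -/
noncomputable def wordElem (k : Type) [Field k] {n : ℕ} (w : List (Fin n)) :
    FreeAlgebra k (Fin n) :=
  (w.map (FreeAlgebra.ι k)).prod

/-- The monomial `x_ε = x_1 x_2 ⋯ x_n` of `k⟨X⟩`. -/
noncomputable def epsElem (k : Type) [Field k] (n : ℕ) : FreeAlgebra k (Fin n) :=
  wordElem k (List.ofFn fun i : Fin n => i)

/-- The set `{ x_{σ(1)} ⋯ x_{σ(n)} − x_1 ⋯ x_n : σ ∈ Sym_n }`. -/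
noncomputable def relSet (k : Type) [Field k] (n : ℕ) : Set (FreeAlgebra k (Fin n)) :=
  { p | ∃ σ : Equiv.Perm (Fin n),
      p = wordElem k (List.ofFn fun i => σ i) - epsElem k n }

/-- The defining relations, as a binary relation on `k⟨X⟩` (`RingQuot` of this relation is
the quotient of `k⟨X⟩` by the two-sided ideal generated by the corresponding differences). -/
def algRel (k : Type) [Field k] (n : ℕ) :
    FreeAlgebra k (Fin n) → FreeAlgebra k (Fin n) → Prop :=
  fun a b => ∃ σ : Equiv.Perm (Fin n),
    a = wordElem k (List.ofFn fun i => σ i) ∧ b = epsElem k n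

/-- The word `x_1^{m_1} · x_ε · x_2^{m_2} ⋯ x_n^{m_n}` as a list of generators. -/
def normalList (n : ℕ) (h : 0 < n) (m : Fin n → ℕ) : List (Fin n) :=
  List.replicate (m ⟨0, h⟩) ⟨0, h⟩ ++ List.ofFn (fun i : Fin n => i) ++
    ((List.finRange n).drop 1).flatMap fun i => List.replicate (m i) i

/-! ### List-level combinatorics -/

section Lists

variable {n : ℕ}

/-- The word `x_1 x_2 ⋯ x_n` as a list. -/
def epsList (n : ℕ) : List (Fin n) := List.ofFn (fun i : Fin n => i)

lemma epsList_length : (epsList n).length = n := by simp [epsList]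

lemma epsList_nodup : (epsList n).Nodup :=
  List.nodup_ofFn.mpr (fun _ _ h => h)

lemma mem_of_len_nodup {p : List (Fin n)} (hl : p.length = n) (hd : p.Nodup) (i : Fin n) :
    i ∈ p := by
  have h1 : p.toFinset.card = n := by
    rw [List.toFinset_card_of_nodup hd, hl]
  have h2 : p.toFinset = Finset.univ := by
    apply Finset.eq_univ_of_card
    rw [h1, Fintype.card_fin]
  have : i ∈ p.toFinset := by rw [h2]; exact Finset.mem_univ i
  simpa using this

lemma count_of_len_nodup {p : List (Fin n)} (hl : p.length = n) (hd : p.Nodup) (i : Fin n) :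
    p.count i = 1 :=
  List.count_eq_one_of_mem hd (mem_of_len_nodup hl hd i)

lemma exists_perm_of_len_nodup {p : List (Fin n)} (hl : p.length = n) (hd : p.Nodup) :
    ∃ σ : Equiv.Perm (Fin n), p = List.ofFn (fun i => σ i) := by
  set g : Fin n → Fin n := fun i => p.get (Fin.cast hl.symm i) with hg
  have hinj : Function.Injective g := by
    intro a b hab
    have := List.nodup_iff_injective_get.mp hd hab
    simpa [Fin.ext_iff] using this
  have hbij : Function.Bijective g := Finite.injective_iff_bijective.mp hinj
  refine ⟨Equiv.ofBijective g hbij, ?_⟩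
  apply List.ext_getElem (by simp [hl])
  intro t h1 h2
  simp [hg, Equiv.ofBijective]

/-- `u` contains a permutation word as a subword. -/
def permSub (n : ℕ) (u : List (Fin n)) : Prop :=
  ∃ (σ : Equiv.Perm (Fin n)) (a b : List (Fin n)),
    u = a ++ (List.ofFn fun i => σ i) ++ b

lemma permSub_of_len_nodup {p : List (Fin n)} (hl : p.length = n) (hd : p.Nodup)
    (a b : List (Fin n)) : permSub n (a ++ p ++ b) := by
  obtain ⟨σ, rfl⟩ := exists_perm_of_len_nodup hl hd
  exact ⟨σ, a, b, rfl⟩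

lemma ofFn_perm_length (σ : Equiv.Perm (Fin n)) :
    (List.ofFn fun i => σ i).length = n := by simp

lemma ofFn_perm_nodup (σ : Equiv.Perm (Fin n)) :
    (List.ofFn fun i => σ i).Nodup :=
  List.nodup_ofFn.mpr σ.injective

lemma permSub_count_pos {u : List (Fin n)} (h : permSub n u) (i : Fin n) :
    1 ≤ u.count i := by
  obtain ⟨σ, a, b, rfl⟩ := h
  rw [List.count_append, List.count_append,
    count_of_len_nodup (ofFn_perm_length σ) (ofFn_perm_nodup σ) i]
  omega

lemma count_append3 (a p b : List (Fin n)) (i : Fin n) :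
    (a ++ p ++ b).count i = a.count i + p.count i + b.count i := by
  simp [List.count_append, Nat.add_assoc]

end Lists
section NormalList

variable {n : ℕ}

lemma count_flatMap_replicate (m : Fin n → ℕ) (l : List (Fin n)) (hd : l.Nodup) (i : Fin n) :
    (l.flatMap fun j => List.replicate (m j) j).count i = if i ∈ l then m i else 0 := by
  induction l with
  | nil => simp
  | cons j l ih =>
    have hd' : l.Nodup := hd.of_cons
    have hj : j ∉ l := by simp [List.nodup_cons] at hd; exact hd.1
    rw [List.flatMap_cons, List.count_append, ih hd', List.count_replicate]
    by_cases hij : i = j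
    · subst hij
      simp [hj]
    · simp [hij, Ne.symm hij]

lemma drop_finRange_nodup : (((List.finRange n)).drop 1).Nodup :=
  (List.nodup_finRange n).sublist (List.drop_sublist 1 _)

lemma mem_drop_finRange (h : 0 < n) (i : Fin n) :
    i ∈ (List.finRange n).drop 1 ↔ i ≠ ⟨0, h⟩ := by
  cases n with
  | zero => omega
  | succ n' =>
    rw [List.finRange_succ]
    simp only [List.drop_succ_cons, List.drop_zero, List.mem_map]
    constructor
    · rintro ⟨j, _, rfl⟩ hji
      exact (Fin.succ_ne_zero j) (by simpa [Fin.ext_iff] using hji)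
    · intro hi
      have : i ≠ 0 := fun h0 => hi (by subst h0; rfl)
      obtain ⟨j, rfl⟩ := Fin.exists_succ_eq.mpr this
      exact ⟨j, List.mem_finRange j, rfl⟩

lemma count_normalList (h : 0 < n) (m : Fin n → ℕ) (i : Fin n) :
    (normalList n h m).count i = m i + 1 := by
  have heps : (List.ofFn fun i : Fin n => i).count i = 1 :=
    count_of_len_nodup (by simp) (List.nodup_ofFn.mpr fun _ _ h => h) i
  rw [normalList, count_append3, heps,
    count_flatMap_replicate m _ drop_finRange_nodup i]
  simp only [mem_drop_finRange h i, List.count_replicate]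
  by_cases hi : i = (⟨0, h⟩ : Fin n)
  · simp [hi]
  · simp [hi, Ne.symm hi, Nat.add_comm]

lemma normalList_permSub (h : 0 < n) (m : Fin n → ℕ) : permSub n (normalList n h m) :=
  permSub_of_len_nodup epsList_length epsList_nodup _ _

end NormalList
section NF

variable {n : ℕ}

open Classical in
/-- Normal form of a word. -/
noncomputable def nf (n : ℕ) (h : 0 < n) (u : List (Fin n)) : List (Fin n) :=
  if permSub n u then normalList n h (fun i => u.count i - 1) else u

variable (h : 0 < n)

lemma nf_of_not_permSub {u : List (Fin n)} (hu : ¬ permSub n u) : nf n h u = u := by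
  rw [nf, if_neg hu]

lemma nf_of_permSub {u : List (Fin n)} (hu : permSub n u) :
    nf n h u = normalList n h (fun i => u.count i - 1) := by
  rw [nf, if_pos hu]

lemma count_nf_of_permSub {u : List (Fin n)} (hu : permSub n u) (i : Fin n) :
    (nf n h u).count i = u.count i := by
  rw [nf_of_permSub h hu, count_normalList h]
  have := permSub_count_pos hu i
  omega

lemma nf_permSub_iff {u : List (Fin n)} : permSub n (nf n h u) ↔ permSub n u := by
  by_cases hu : permSub n u
  · rw [nf_of_permSub h hu]
    exact ⟨fun _ => hu, fun _ => normalList_permSub h _⟩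
  · rw [nf_of_not_permSub h hu]

lemma nf_nf (u : List (Fin n)) : nf n h (nf n h u) = nf n h u := by
  by_cases hu : permSub n u
  · rw [nf_of_permSub h ((nf_permSub_iff h).mpr hu)]
    rw [nf_of_permSub h hu]
    congr 1
    funext i
    rw [← nf_of_permSub h hu, count_nf_of_permSub h hu]
  · rw [nf_of_not_permSub h hu, nf_of_not_permSub h hu]

lemma permSub_append_left {u : List (Fin n)} (hu : permSub n u) (w : List (Fin n)) :
    permSub n (u ++ w) := by
  obtain ⟨σ, a, b, rfl⟩ := hu
  exact ⟨σ, a, b ++ w, by simp⟩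

lemma permSub_append_right {u : List (Fin n)} (hu : permSub n u) (w : List (Fin n)) :
    permSub n (w ++ u) := by
  obtain ⟨σ, a, b, rfl⟩ := hu
  exact ⟨σ, w ++ a, b, by simp⟩

lemma nf_append_congr_left (u w : List (Fin n)) :
    nf n h (u ++ w) = nf n h (nf n h u ++ w) := by
  by_cases hu : permSub n u
  · have h1 : permSub n (u ++ w) := permSub_append_left hu w
    have h2 : permSub n (nf n h u ++ w) :=
      permSub_append_left ((nf_permSub_iff h).mpr hu) w
    rw [nf_of_permSub h h1, nf_of_permSub h h2]
    congr 1
    funext i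
    rw [List.count_append, List.count_append, count_nf_of_permSub h hu]
  · rw [nf_of_not_permSub h hu]

lemma nf_append_congr_right (u w : List (Fin n)) :
    nf n h (w ++ u) = nf n h (w ++ nf n h u) := by
  by_cases hu : permSub n u
  · have h1 : permSub n (w ++ u) := permSub_append_right hu w
    have h2 : permSub n (w ++ nf n h u) :=
      permSub_append_right ((nf_permSub_iff h).mpr hu) w
    rw [nf_of_permSub h h1, nf_of_permSub h h2]
    congr 1
    funext i
    rw [List.count_append, List.count_append, count_nf_of_permSub h hu]
  · rw [nf_of_not_permSub h hu]

lemma nf_perm_word (σ : Equiv.Perm (Fin n)) :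
    nf n h (List.ofFn fun i => σ i) = nf n h (epsList n) := by
  have h1 : permSub n (List.ofFn fun i => σ i) := ⟨σ, [], [], by simp⟩
  have h2' : permSub n (List.ofFn fun i : Fin n => i) := by
    have := permSub_of_len_nodup (epsList_length (n := n)) epsList_nodup [] []
    simpa [epsList] using this
  rw [epsList, nf_of_permSub h h1, nf_of_permSub h h2']
  congr 1
  funext i
  rw [count_of_len_nodup (ofFn_perm_length σ) (ofFn_perm_nodup σ) i,
    count_of_len_nodup (p := List.ofFn fun i : Fin n => i) (by simp)
      (List.nodup_ofFn.mpr fun _ _ h => h) i]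

lemma nf_normalList (m : Fin n → ℕ) : nf n h (normalList n h m) = normalList n h m := by
  rw [nf_of_permSub h (normalList_permSub h m)]
  conv_lhs => rw [show (fun i => (normalList n h m).count i - 1) = m from funext fun i => by rw [count_normalList h]; omega]

end NF
section Alg

variable {n : ℕ} (k : Type) [Field k]

/-- Image of a word in the quotient. -/
noncomputable def mkW (u : List (Fin n)) : RingQuot (algRel k n) :=
  RingQuot.mkAlgHom k (algRel k n) (wordElem k u)

lemma wordElem_append (u v : List (Fin n)) :
    wordElem k (u ++ v) = wordElem k u * wordElem k v := by
  simp [wordElem, List.map_append, List.prod_append]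

lemma mkW_append (u v : List (Fin n)) : mkW k (u ++ v) = mkW k u * mkW k v := by
  rw [mkW, mkW, mkW, wordElem_append, map_mul]

lemma mkW_perm (σ : Equiv.Perm (Fin n)) :
    mkW k (List.ofFn fun i => σ i) = mkW k (epsList n) :=
  RingQuot.mkAlgHom_rel k ⟨σ, rfl, rfl⟩

lemma mkW_base {p : List (Fin n)} (hl : p.length = n) (hd : p.Nodup)
    (a b : List (Fin n)) : mkW k (a ++ p ++ b) = mkW k (a ++ epsList n ++ b) := by
  obtain ⟨σ, rfl⟩ := exists_perm_of_len_nodup hl hd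
  rw [mkW_append, mkW_append, mkW_append, mkW_append, mkW_perm]

lemma mkW_central (x : Fin n) :
    mkW k (epsList n ++ [x]) = mkW k ([x] ++ epsList n) := by
  have hn1 : 0 < n := x.pos
  have hx : x ∈ epsList n := mem_of_len_nodup epsList_length epsList_nodup x
  set t := (epsList n).erase x with ht
  have htd : t.Nodup := epsList_nodup.erase x
  have hxt : x ∉ t := epsList_nodup.not_mem_erase
  have htl : t.length = n - 1 := by
    rw [ht, List.length_erase_of_mem hx, epsList_length]
  have h1 : (x :: t).length = n := by simp [htl]; omega
  have h1d : (x :: t).Nodup := by simp [List.nodup_cons, hxt, htd]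
  have h2 : (t ++ [x]).length = n := by simp [htl]; omega
  have h2d : (t ++ [x]).Nodup := by
    simp [List.nodup_append, htd, hxt]
    intro a ha hax
    exact hxt (hax ▸ ha)
  calc mkW k (epsList n ++ [x]) = mkW k ([] ++ epsList n ++ [x]) := by simp
    _ = mkW k ([] ++ (x :: t) ++ [x]) := (mkW_base k h1 h1d [] [x]).symm
    _ = mkW k ([x] ++ (t ++ [x]) ++ []) := by simp
    _ = mkW k ([x] ++ epsList n ++ []) := mkW_base k h2 h2d [x] []
    _ = mkW k ([x] ++ epsList n) := by simp

lemma mkW_eps_cons (x : Fin n) (u : List (Fin n)) :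
    mkW k (epsList n ++ (x :: u)) = mkW k [x] * mkW k (epsList n ++ u) := by
  have hc := mkW_central k x
  rw [mkW_append, mkW_append] at hc
  calc mkW k (epsList n ++ (x :: u))
      = mkW k ((epsList n ++ [x]) ++ u) := by simp
    _ = (mkW k (epsList n) * mkW k [x]) * mkW k u := by
          rw [mkW_append, mkW_append]
    _ = (mkW k [x] * mkW k (epsList n)) * mkW k u := by rw [hc]
    _ = mkW k [x] * (mkW k (epsList n) * mkW k u) := by rw [mul_assoc]
    _ = mkW k [x] * mkW k (epsList n ++ u) := by rw [mkW_append]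

lemma mkW_move (a b : List (Fin n)) :
    mkW k (a ++ epsList n ++ b) = mkW k (epsList n ++ (a ++ b)) := by
  induction a with
  | nil => simp
  | cons x a ih =>
    calc mkW k ((x :: a) ++ epsList n ++ b)
        = mkW k ([x] ++ (a ++ epsList n ++ b)) := by simp
      _ = mkW k [x] * mkW k (a ++ epsList n ++ b) := mkW_append k _ _
      _ = mkW k [x] * mkW k (epsList n ++ (a ++ b)) := by rw [ih]
      _ = mkW k (epsList n ++ (x :: (a ++ b))) := (mkW_eps_cons k _ _).symm
      _ = mkW k (epsList n ++ ((x :: a) ++ b)) := rfl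

lemma mkW_swap (x y : Fin n) :
    mkW k (epsList n ++ [x, y]) = mkW k (epsList n ++ [y, x]) := by
  by_cases hxy : x = y
  · subst hxy; rfl
  · have hn1 : 0 < n := x.pos
    have hn2 : 2 ≤ n := by
      by_contra hlt
      push_neg at hlt
      interval_cases n
      exact hxy (Subsingleton.elim x y)
    have hx : x ∈ (epsList n).erase y :=
      (List.mem_erase_of_ne hxy).mpr (mem_of_len_nodup epsList_length epsList_nodup x)
    have hy : y ∈ epsList n := mem_of_len_nodup epsList_length epsList_nodup y
    set t := ((epsList n).erase y).erase x with ht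
    have htd : t.Nodup := (epsList_nodup.erase y).erase x
    have hxt : x ∉ t := (epsList_nodup.erase y).not_mem_erase
    have hyt : y ∉ t := by
      intro hmem
      exact epsList_nodup.not_mem_erase ((List.erase_sublist (a := x) (l := (epsList n).erase y)).mem hmem)
    have htl : t.length = n - 2 := by
      rw [ht, List.length_erase_of_mem hx, List.length_erase_of_mem hy, epsList_length]
      omega
    have h1 : (y :: x :: t).length = n := by simp [htl]; omega
    have h1d : (y :: x :: t).Nodup := by
      simp [List.nodup_cons, hxt, hyt, htd, hxy, Ne.symm hxy]
    have h2 : (t ++ [x, y]).length = n := by simp [htl]; omega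
    have h2d : (t ++ [x, y]).Nodup := by
      rw [List.nodup_append]
      refine ⟨htd, by simp [hxy], ?_⟩
      intro a hat b hal hab
      subst hab
      rcases List.mem_cons.mp hal with rfl | hal'
      · exact hxt hat
      · rcases List.mem_cons.mp hal' with rfl | hal''
        · exact hyt hat
        · simp at hal''
    calc mkW k (epsList n ++ [x, y]) = mkW k ([] ++ epsList n ++ [x, y]) := by simp
      _ = mkW k ([] ++ (y :: x :: t) ++ [x, y]) := (mkW_base k h1 h1d [] [x, y]).symm
      _ = mkW k ([y, x] ++ (t ++ [x, y]) ++ []) := by simp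
      _ = mkW k ([y, x] ++ epsList n ++ []) := mkW_base k h2 h2d [y, x] []
      _ = mkW k (epsList n ++ ([y, x] ++ [])) := mkW_move k [y, x] []
      _ = mkW k (epsList n ++ [y, x]) := by simp

lemma mkW_eps_perm {u v : List (Fin n)} (huv : u.Perm v) :
    mkW k (epsList n ++ u) = mkW k (epsList n ++ v) := by
  induction huv with
  | nil => rfl
  | cons x huv ih =>
    rw [mkW_eps_cons, mkW_eps_cons, ih]
  | swap x y l =>
    calc mkW k (epsList n ++ (y :: x :: l))
        = mkW k ((epsList n ++ [y, x]) ++ l) := by simp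
      _ = mkW k (epsList n ++ [y, x]) * mkW k l := mkW_append k _ _
      _ = mkW k (epsList n ++ [x, y]) * mkW k l := by rw [mkW_swap]
      _ = mkW k ((epsList n ++ [x, y]) ++ l) := (mkW_append k _ _).symm
      _ = mkW k (epsList n ++ (x :: y :: l)) := by simp
  | trans h1 h2 ih1 ih2 => rw [ih1, ih2]

end Alg
section Main

variable {n : ℕ} (k : Type) [Field k]

lemma mkW_nf (hn : 0 < n) (u : List (Fin n)) : mkW k u = mkW k (nf n hn u) := by
  by_cases hu : permSub n u
  · obtain ⟨σ, a, b, huu⟩ := hu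
    subst huu
    set p := (List.ofFn fun i => σ i) with hp
    set m : Fin n → ℕ := fun i => (a ++ p ++ b).count i - 1 with hm
    have hnf : nf n hn (a ++ p ++ b) = normalList n hn m :=
      nf_of_permSub hn ⟨σ, a, b, rfl⟩
    rw [hnf]
    set rep := List.replicate (m ⟨0, hn⟩) (⟨0, hn⟩ : Fin n) with hrep
    set flat := ((List.finRange n).drop 1).flatMap (fun i => List.replicate (m i) i) with hflat
    have hNL : normalList n hn m = rep ++ epsList n ++ flat := rfl
    have hpl : p.length = n := by simp [hp]
    have hpd : p.Nodup := List.nodup_ofFn.mpr σ.injective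
    have hperm : (a ++ b).Perm (rep ++ flat) := by
      rw [List.perm_iff_count]
      intro i
      have h1 := count_normalList hn m i
      rw [hNL, count_append3] at h1
      have h2 : (epsList n).count i = 1 :=
        count_of_len_nodup epsList_length epsList_nodup i
      have h3 : p.count i = 1 := count_of_len_nodup hpl hpd i
      have h4 : (a ++ p ++ b).count i = a.count i + p.count i + b.count i :=
        count_append3 ..
      have h5 : m i = (a ++ p ++ b).count i - 1 := rfl
      rw [List.count_append, List.count_append]
      omega
    calc mkW k (a ++ p ++ b)
        = mkW k (a ++ epsList n ++ b) := mkW_base k hpl hpd a b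
      _ = mkW k (epsList n ++ (a ++ b)) := mkW_move k a b
      _ = mkW k (epsList n ++ (rep ++ flat)) := mkW_eps_perm k hperm
      _ = mkW k (rep ++ epsList n ++ flat) := (mkW_move k rep flat).symm
      _ = mkW k (normalList n hn m) := by rw [hNL]
  · rw [nf_of_not_permSub hn hu]

lemma wordElem_nil : wordElem k ([] : List (Fin n)) = 1 := by simp [wordElem]

lemma wordElem_singleton (x : Fin n) : wordElem k [x] = FreeAlgebra.ι k x := by
  simp [wordElem]

lemma span_wordElem (y : FreeAlgebra k (Fin n)) :
    y ∈ Submodule.span k (Set.range fun u : List (Fin n) => wordElem k u) := by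
  set S := Submodule.span k (Set.range fun u : List (Fin n) => wordElem k u) with hS
  induction y using FreeAlgebra.induction with
  | grade0 r =>
    have : algebraMap k (FreeAlgebra k (Fin n)) r = r • wordElem k [] := by
      rw [wordElem_nil, Algebra.algebraMap_eq_smul_one]
    rw [this]
    exact S.smul_mem r (Submodule.subset_span ⟨[], rfl⟩)
  | grade1 x =>
    exact Submodule.subset_span ⟨[x], wordElem_singleton k x⟩
  | mul a b ha hb =>
    have key : ∀ x ∈ S, ∀ y ∈ S, x * y ∈ S := by
      intro x hx
      induction hx using Submodule.span_induction with
      | mem x hxmem =>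
        obtain ⟨u, rfl⟩ := hxmem
        intro y hy
        induction hy using Submodule.span_induction with
        | mem y hymem =>
          obtain ⟨v, rfl⟩ := hymem
          exact Submodule.subset_span ⟨u ++ v, wordElem_append k u v⟩
        | zero => simp
        | add y z _ _ hy hz => rw [mul_add]; exact S.add_mem hy hz
        | smul c y _ hy => rw [mul_smul_comm]; exact S.smul_mem c hy
      | zero => intro y hy; simp
      | add x z _ _ hx hz => intro y hy; rw [add_mul]; exact S.add_mem (hx y hy) (hz y hy)
      | smul c x _ hx => intro y hy; rw [smul_mul_assoc]; exact S.smul_mem c (hx y hy)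
    exact key a ha b hb
  | add a b ha hb => exact S.add_mem ha hb

end Main
section Phi

variable {n : ℕ} (k : Type) [Field k] (hn : 0 < n)

/-- Normal form on the free monoid. -/
noncomputable def nfM (n : ℕ) (hn : 0 < n) : FreeMonoid (Fin n) → FreeMonoid (Fin n) :=
  fun u => FreeMonoid.ofList (nf n hn u.toList)

/-- `mapDomain` along `nfM`, with its type as an endomap of the monoid algebra. -/
noncomputable def Dmap (k : Type) [Field k] {n : ℕ} (hn : 0 < n) :
    MonoidAlgebra k (FreeMonoid (Fin n)) → MonoidAlgebra k (FreeMonoid (Fin n)) :=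
  MonoidAlgebra.mapDomain (nfM n hn)

lemma Dmap_zero : Dmap k hn (0 : MonoidAlgebra k (FreeMonoid (Fin n))) = 0 :=
  MonoidAlgebra.mapDomain_zero _

lemma Dmap_add (A B : MonoidAlgebra k (FreeMonoid (Fin n))) :
    Dmap k hn (A + B) = Dmap k hn A + Dmap k hn B :=
  MonoidAlgebra.mapDomain_add _ _ _

lemma Dmap_single (a : FreeMonoid (Fin n)) (r : k) :
    Dmap k hn (MonoidAlgebra.single a r) = MonoidAlgebra.single (nfM n hn a) r :=
  MonoidAlgebra.mapDomain_single

/-- The linear "normal form" map on the monoid algebra side. -/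
noncomputable def PhiL : FreeAlgebra k (Fin n) →ₗ[k] MonoidAlgebra k (FreeMonoid (Fin n)) :=
  (MonoidAlgebra.mapDomainLinearMap k k (nfM n hn)).comp
    (FreeAlgebra.equivMonoidAlgebraFreeMonoid.toLinearEquiv.toLinearMap)

lemma PhiL_apply (x : FreeAlgebra k (Fin n)) :
    PhiL k hn x = Dmap k hn (FreeAlgebra.equivMonoidAlgebraFreeMonoid x) := rfl

lemma equiv_wordElem (u : List (Fin n)) :
    FreeAlgebra.equivMonoidAlgebraFreeMonoid (wordElem k u) =
      MonoidAlgebra.single (FreeMonoid.ofList u) 1 := by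
  induction u with
  | nil =>
    rw [wordElem_nil, map_one]
    rfl
  | cons x u ih =>
    have hx : (FreeAlgebra.equivMonoidAlgebraFreeMonoid (FreeAlgebra.ι k x) :
        MonoidAlgebra k (FreeMonoid (Fin n))) = MonoidAlgebra.single (FreeMonoid.of x) 1 := by
      simp [FreeAlgebra.equivMonoidAlgebraFreeMonoid]
    have hcons : wordElem k (x :: u) = FreeAlgebra.ι k x * wordElem k u := by
      simp [wordElem]
    rw [hcons, map_mul, hx, ih, MonoidAlgebra.single_mul_single, one_mul]
    rfl

lemma PhiL_wordElem (u : List (Fin n)) :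
    PhiL k hn (wordElem k u) =
      MonoidAlgebra.single (FreeMonoid.ofList (nf n hn u)) 1 := by
  rw [PhiL_apply, equiv_wordElem, Dmap_single]
  rfl

lemma key_mul_left (A C : MonoidAlgebra k (FreeMonoid (Fin n))) :
    Dmap k hn (A * C) = Dmap k hn (Dmap k hn A * C) := by
  induction A using MonoidAlgebra.induction_linear with
  | zero => rw [zero_mul, Dmap_zero, zero_mul, Dmap_zero]
  | add A A' ihA ihA' =>
    rw [add_mul, Dmap_add, Dmap_add, add_mul, Dmap_add, ihA, ihA']
  | single a r =>
    induction C using MonoidAlgebra.induction_linear with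
    | zero => rw [mul_zero, mul_zero, Dmap_zero]
    | add C C' ihC ihC' =>
      rw [mul_add, Dmap_add, ihC, ihC', mul_add, Dmap_add]
    | single c s =>
      have hs : Dmap k hn (MonoidAlgebra.single a r) = MonoidAlgebra.single (nfM n hn a) r :=
        Dmap_single k hn a r
      rw [MonoidAlgebra.single_mul_single, Dmap_single, hs,
        MonoidAlgebra.single_mul_single, Dmap_single]
      congr 1
      show FreeMonoid.ofList (nf n hn (a.toList ++ c.toList)) =
        FreeMonoid.ofList (nf n hn ((nfM n hn a).toList ++ c.toList))
      rw [show (nfM n hn a).toList = nf n hn a.toList from rfl, nf_append_congr_left]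

lemma key_mul_right (A C : MonoidAlgebra k (FreeMonoid (Fin n))) :
    Dmap k hn (A * C) = Dmap k hn (A * Dmap k hn C) := by
  induction C using MonoidAlgebra.induction_linear with
  | zero => rw [mul_zero, Dmap_zero, mul_zero, Dmap_zero]
  | add C C' ihC ihC' =>
    rw [mul_add, Dmap_add, Dmap_add, mul_add, Dmap_add, ihC, ihC']
  | single c s =>
    induction A using MonoidAlgebra.induction_linear with
    | zero => rw [zero_mul, zero_mul, Dmap_zero]
    | add A A' ihA ihA' =>
      rw [add_mul, Dmap_add, ihA, ihA', add_mul, Dmap_add]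
    | single a r =>
      have hs : Dmap k hn (MonoidAlgebra.single c s) = MonoidAlgebra.single (nfM n hn c) s :=
        Dmap_single k hn c s
      rw [MonoidAlgebra.single_mul_single, Dmap_single, hs,
        MonoidAlgebra.single_mul_single, Dmap_single]
      congr 1
      show FreeMonoid.ofList (nf n hn (a.toList ++ c.toList)) =
        FreeMonoid.ofList (nf n hn (a.toList ++ (nfM n hn c).toList))
      rw [show (nfM n hn c).toList = nf n hn c.toList from rfl, nf_append_congr_right]

lemma PhiL_rel {x y : FreeAlgebra k (Fin n)} (h : RingQuot.Rel (algRel k n) x y) :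
    PhiL k hn x = PhiL k hn y := by
  induction h with
  | of h =>
    obtain ⟨σ, rfl, rfl⟩ := h
    rw [show epsElem k n = wordElem k (List.ofFn fun i : Fin n => i) from rfl]
    rw [PhiL_wordElem, PhiL_wordElem]
    congr 2
    have := nf_perm_word hn σ
    rw [epsList] at this
    exact this
  | add_left h ih =>
    simp only [map_add, ih]
  | mul_left h ih =>
    rw [PhiL_apply, PhiL_apply, map_mul, map_mul, key_mul_left]
    rw [PhiL_apply, PhiL_apply] at ih
    rw [ih, ← key_mul_left]
  | mul_right h ih =>
    rw [PhiL_apply, PhiL_apply, map_mul, map_mul, key_mul_right]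
    rw [PhiL_apply, PhiL_apply] at ih
    rw [ih, ← key_mul_right]

lemma PhiL_eqvGen {x y : FreeAlgebra k (Fin n)}
    (h : Relation.EqvGen (RingQuot.Rel (algRel k n)) x y) :
    PhiL k hn x = PhiL k hn y := by
  induction h with
  | rel _ _ h => exact PhiL_rel k hn h
  | refl => rfl
  | symm _ _ _ ih => exact ih.symm
  | trans _ _ _ _ _ ih1 ih2 => exact ih1.trans ih2

lemma eqvGen_of_mk_eq {x y : FreeAlgebra k (Fin n)}
    (h : RingQuot.mkAlgHom k (algRel k n) x = RingQuot.mkAlgHom k (algRel k n) y) :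
    Relation.EqvGen (RingQuot.Rel (algRel k n)) x y := by
  have h2 : RingQuot.mkRingHom (algRel k n) x = RingQuot.mkRingHom (algRel k n) y := by
    have h1 : ((RingQuot.mkAlgHom k (algRel k n) : FreeAlgebra k (Fin n) →+*
        RingQuot (algRel k n))) x = ((RingQuot.mkAlgHom k (algRel k n) : FreeAlgebra k (Fin n) →+*
        RingQuot (algRel k n))) y := h
    rwa [RingQuot.mkAlgHom_coe k (algRel k n)] at h1
  rw [RingQuot.mkRingHom_def] at h2
  simp only [RingHom.coe_mk, MonoidHom.coe_mk, OneHom.coe_mk] at h2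
  exact Quot.eqvGen_exact (congrArg RingQuot.toQuot h2)

end Phi
/-- The images in `k⟨X⟩/I` of the words with no subword `x_{σ(1)}⋯x_{σ(n)}`, together with the
words `x_1^{m_1}·x_ε·x_2^{m_2}⋯x_n^{m_n}`, form a `k`-linear basis of `k⟨X⟩/I`. -/
theorem basis_of_quotient (n : ℕ) (hn : 1 ≤ n) (k : Type) [Field k]
    (N : Set (List (Fin n)))
    (hN : N = {w : List (Fin n) |
        ¬ ∃ (σ : Equiv.Perm (Fin n)) (a b : List (Fin n)),
            w = a ++ (List.ofFn fun i => σ i) ++ b} ∪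
      {w : List (Fin n) | ∃ m : Fin n → ℕ, w = normalList n hn m})
    (B : N → RingQuot (algRel k n))
    (hB : ∀ w : N, B w = RingQuot.mkAlgHom k (algRel k n) (wordElem k (w : List (Fin n)))) :
    LinearIndependent k B ∧ Submodule.span k (Set.range B) = ⊤ := by
  have hn' : 0 < n := hn
  have hNf : ∀ u : List (Fin n), nf n hn' u ∈ N := by
    intro u
    rw [hN]
    by_cases hu : permSub n u
    · right
      exact ⟨_, nf_of_permSub hn' hu⟩
    · left
      rw [nf_of_not_permSub hn' hu]
      exact hu
  have hfix : ∀ w : N, nf n hn' (w : List (Fin n)) = (w : List (Fin n)) := by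
    rintro ⟨wv, hw⟩
    show nf n hn' wv = wv
    rw [hN] at hw
    rcases (Set.mem_union _ _ _).mp hw with h | h
    · exact nf_of_not_permSub hn' h
    · obtain ⟨m, hm⟩ := h
      rw [hm]
      exact nf_normalList hn' m
  constructor
  · rw [linearIndependent_iff]
    intro l hl
    have hsum : RingQuot.mkAlgHom k (algRel k n)
        (l.sum fun w c => c • wordElem k (w : List (Fin n))) =
        RingQuot.mkAlgHom k (algRel k n) 0 := by
      rw [map_zero, map_finsuppSum]
      rw [Finsupp.linearCombination_apply] at hl
      rw [← hl]
      apply Finsupp.sum_congr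
      intro w _
      rw [map_smul, ← hB w]
    have heq := PhiL_eqvGen k hn' (eqvGen_of_mk_eq k hsum)
    rw [map_zero, map_finsuppSum] at heq
    have heq2 : (l.sum fun w c =>
        MonoidAlgebra.single (FreeMonoid.ofList (w : List (Fin n))) c) = 0 := by
      rw [← heq]
      apply (Finsupp.sum_congr ?_).symm
      intro w _
      rw [map_smul, PhiL_wordElem, hfix w, MonoidAlgebra.smul_single', mul_one]
    have hinj : Function.Injective (fun w : N => FreeMonoid.ofList (w : List (Fin n))) := by
      intro a b hab
      exact Subtype.ext (FreeMonoid.ofList.injective hab)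
    have hmd : Finsupp.mapDomain (fun w : N => FreeMonoid.ofList (w : List (Fin n))) l =
        Finsupp.mapDomain (fun w : N => FreeMonoid.ofList (w : List (Fin n))) 0 := by
      rw [Finsupp.mapDomain_zero]
      have := congrArg MonoidAlgebra.coeff heq2
      rw [MonoidAlgebra.coeff_finsuppSum, MonoidAlgebra.coeff_zero] at this
      exact this
    exact Finsupp.mapDomain_injective hinj hmd
  · rw [eq_top_iff]
    rintro x -
    obtain ⟨y, rfl⟩ := RingQuot.mkAlgHom_surjective k (algRel k n) x
    have hy := span_wordElem k y
    have hmap := Submodule.mem_map_of_mem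
      (f := (RingQuot.mkAlgHom k (algRel k n)).toLinearMap) hy
    rw [Submodule.map_span] at hmap
    refine Submodule.span_le.mpr ?_ hmap
    rintro z ⟨_, ⟨u, rfl⟩, rfl⟩
    have hz : (RingQuot.mkAlgHom k (algRel k n)).toLinearMap (wordElem k u) =
        B ⟨nf n hn' u, hNf u⟩ := by
      rw [hB]
      exact mkW_nf k hn' u
    rw [hz]
    exact Submodule.subset_span ⟨⟨nf n hn' u, hNf u⟩, rfl⟩
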